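/- The only integer solution (x,y) of the equation (2x+y)/√(3y²-4y+2) = -(x+2y)/√(3x²-4x+2) is x = y = 0. -/

import Mathlib

-- integer core lemma
lemma core (x y : ℤ)
    (hE : (2*x+y)^2 * (3*x^2-4*x+2) = (x+2*y)^2 * (3*y^2-4*y+2))
    (hAB : (2*x+y) * (x+2*y) ≤ 0)
    (hA0 : 2*x+y = 0 → x+2*y = 0) :
    x = 0 ∧ y = 0 := by
  have key : (x - y) * (12*x^3 - 16*x^2 + 24*x^2*y + 6*x - 28*x*y + 24*x*y^2
      - 16*y^2 + 12*y^3 + 6*y) = 0 := by linear_combination hE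
  rcases mul_eq_zero.mp key with hxy | hG
  · have hxy' : x = y := by omega
    subst hxy'
    have : x = 0 := by nlinarith
    exact ⟨this, this⟩
  · rcases lt_or_eq_of_le hAB with hlt | heq
    · exfalso
      rcases lt_trichotomy (x + y) 0 with hs | hs | hs
      · nlinarith [sq_nonneg (x+y), sq_nonneg (x-y), mul_pos (by omega : (0:ℤ) < -(x+y)) (by omega : (0:ℤ) < -(x+y))]
      · have hp : x * y < -2*(x+y)^2 := by nlinarith
        nlinarith [sq_nonneg (x-y)]
      · nlinarith [sq_nonneg (x+y), sq_nonneg (x-y)]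
    · -- A*B = 0
      rcases mul_eq_zero.mp heq with hA | hB
      · have hB := hA0 hA
        constructor <;> omega
      · -- B = 0; from hE, A^2 * Qx = 0, Qx > 0 → A = 0
        have hQx : 0 < 3*x^2-4*x+2 := by nlinarith [sq_nonneg (3*x-2)]
        have : (2*x+y)^2 * (3*x^2-4*x+2) = 0 := by rw [hE, hB]; ring
        have hA : 2*x+y = 0 := by
          rcases mul_eq_zero.mp this with h1 | h2
          · exact pow_eq_zero_iff (by norm_num) |>.mp h1
          · omega
        constructor <;> omega

theorem stmt0 (x y : ℤ)
    (h : (2 * (x : ℝ) + y) / Real.sqrt (3 * (y : ℝ)^2 - 4 * y + 2)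
       = -(((x : ℝ) + 2 * y) / Real.sqrt (3 * (x : ℝ)^2 - 4 * x + 2))) :
    x = 0 ∧ y = 0 := by
  have hQx : (0:ℝ) < 3 * (x:ℝ)^2 - 4 * x + 2 := by nlinarith [sq_nonneg (3*(x:ℝ)-2)]
  have hQy : (0:ℝ) < 3 * (y:ℝ)^2 - 4 * y + 2 := by nlinarith [sq_nonneg (3*(y:ℝ)-2)]
  have hsx : 0 < Real.sqrt (3 * (x:ℝ)^2 - 4 * x + 2) := Real.sqrt_pos.mpr hQx
  have hsy : 0 < Real.sqrt (3 * (y:ℝ)^2 - 4 * y + 2) := Real.sqrt_pos.mpr hQy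
  have hmain : (2 * (x:ℝ) + y) * Real.sqrt (3 * (x:ℝ)^2 - 4 * x + 2)
      = -(((x:ℝ) + 2 * y) * Real.sqrt (3 * (y:ℝ)^2 - 4 * y + 2)) := by
    have e : ((x:ℝ) + 2 * y) / Real.sqrt (3 * (x:ℝ)^2 - 4 * x + 2) * Real.sqrt (3 * (x:ℝ)^2 - 4 * x + 2) = (x:ℝ) + 2 * y :=
      div_mul_cancel₀ _ hsx.ne'
    have e2 : (2 * (x:ℝ) + y) / Real.sqrt (3 * (y:ℝ)^2 - 4 * y + 2) * Real.sqrt (3 * (y:ℝ)^2 - 4 * y + 2) = 2 * (x:ℝ) + y :=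
      div_mul_cancel₀ _ hsy.ne'
    linear_combination (Real.sqrt (3 * (x:ℝ)^2 - 4 * x + 2) * Real.sqrt (3 * (y:ℝ)^2 - 4 * y + 2)) * h
      - Real.sqrt (3 * (x:ℝ)^2 - 4 * x + 2) * e2 - Real.sqrt (3 * (y:ℝ)^2 - 4 * y + 2) * e
  have sqx : (Real.sqrt (3 * (x:ℝ)^2 - 4 * x + 2))^2 = 3 * (x:ℝ)^2 - 4 * x + 2 :=
    Real.sq_sqrt hQx.le
  have sqy : (Real.sqrt (3 * (y:ℝ)^2 - 4 * y + 2))^2 = 3 * (y:ℝ)^2 - 4 * y + 2 :=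
    Real.sq_sqrt hQy.le
  have hER : (2*(x:ℝ)+y)^2 * (3*(x:ℝ)^2-4*x+2) = ((x:ℝ)+2*y)^2 * (3*(y:ℝ)^2-4*y+2) := by
    have h2 : ((2 * (x:ℝ) + y) * Real.sqrt (3 * (x:ℝ)^2 - 4 * x + 2))^2
        = (((x:ℝ) + 2 * y) * Real.sqrt (3 * (y:ℝ)^2 - 4 * y + 2))^2 := by rw [hmain]; ring
    linear_combination h2 - (2*(x:ℝ)+y)^2 * sqx + ((x:ℝ)+2*y)^2 * sqy
  have hABR : (2*(x:ℝ)+y) * ((x:ℝ)+2*y) ≤ 0 := by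
    have h1 : (2*(x:ℝ)+y) * ((x:ℝ)+2*y) * (Real.sqrt (3 * (x:ℝ)^2 - 4 * x + 2) * Real.sqrt (3 * (y:ℝ)^2 - 4 * y + 2))
        = -((((x:ℝ) + 2 * y) * Real.sqrt (3 * (y:ℝ)^2 - 4 * y + 2))^2) := by
      linear_combination (((x:ℝ) + 2 * y) * Real.sqrt (3 * (y:ℝ)^2 - 4 * y + 2)) * hmain
    nlinarith [sq_nonneg (((x:ℝ) + 2 * y) * Real.sqrt (3 * (y:ℝ)^2 - 4 * y + 2)), mul_pos hsx hsy]
  have hA0R : (2*(x:ℝ)+y) = 0 → ((x:ℝ)+2*y) = 0 := by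
    intro hA
    rw [hA] at hmain
    have : ((x:ℝ) + 2 * y) * Real.sqrt (3 * (y:ℝ)^2 - 4 * y + 2) = 0 := by linarith
    rcases mul_eq_zero.mp this with h1 | h2
    · exact h1
    · exact absurd h2 (ne_of_gt hsy)
  apply core x y
  · exact_mod_cast hER
  · exact_mod_cast hABR
  · intro hA
    have : (2*(x:ℝ)+y) = 0 := by exact_mod_cast hA
    exact_mod_cast hA0R this
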